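/- Suppose λ > 0 is such that the allocation A*_k := min{1, λ/√(φ_k)} satisfies the budget equality Σ_{k=1}^{n} A*_k·ψ_k = B. Then A* is feasible (in particular, A*_k is non-increasing in k and 0 < A*_k ≤ 1), and A* minimizes the objective Σ_{k=1}^{n} 1/A_k over all feasible allocations: for every feasible A, Σ_{k=1}^{n} 1/A*_k ≤ Σ_{k=1}^{n} 1/A_k. -/

import Mathlib

/-- Virtual cost of the uniform distribution over `{c 1, …, c n}`:
`ψ k = k·c k − (k−1)·c (k−1)`. -/
noncomputable def vc (c : ℕ → ℝ) (i : ℕ) : ℝ :=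
  (i : ℝ) * c i - ((i : ℝ) - 1) * c (i - 1)

/-- `Avg(i,k) = (1/(k−i+1))·Σ_{j=i}^{k} ψ_j`. -/
noncomputable def avg (c : ℕ → ℝ) (i k : ℕ) : ℝ :=
  (∑ j ∈ Finset.Icc i k, vc c j) / ((k : ℝ) - (i : ℝ) + 1)

/-- `ψ'_i = min_{i ≤ k ≤ n} Avg(i,k)`. -/
noncomputable def rvcAux (n : ℕ) (c : ℕ → ℝ) (i : ℕ) : ℝ :=
  sInf {x | ∃ k, i ≤ k ∧ k ≤ n ∧ x = avg c i k}

/-- Regularized virtual cost: `φ_i = max_{1 ≤ j ≤ i} ψ'_j`. -/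
noncomputable def rvc (n : ℕ) (c : ℕ → ℝ) (i : ℕ) : ℝ :=
  sSup {x | ∃ j, 1 ≤ j ∧ j ≤ i ∧ x = rvcAux n c j}

/-- An allocation `A` is feasible: `0 < A_k ≤ 1`, non-increasing, and the
expected virtual cost is within the budget `B`. -/
def Feasible (n : ℕ) (c : ℕ → ℝ) (B : ℝ) (A : ℕ → ℝ) : Prop :=
  (∀ k, 1 ≤ k → k ≤ n → 0 < A k ∧ A k ≤ 1) ∧
    (∀ k, 1 ≤ k → k < n → A (k + 1) ≤ A k) ∧
    ∑ k ∈ Finset.Icc 1 n, A k * vc c k ≤ B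

namespace Stmt5aux

variable (n : ℕ) (c : ℕ → ℝ)

lemma auxSet_eq (i : ℕ) :
    {x | ∃ k, i ≤ k ∧ k ≤ n ∧ x = avg c i k}
      = ↑((Finset.Icc i n).image (avg c i)) := by
  ext x
  simp only [Set.mem_setOf_eq, Finset.coe_image, Set.mem_image, Finset.mem_coe,
    Finset.mem_Icc]
  constructor
  · rintro ⟨k, h1, h2, rfl⟩; exact ⟨k, ⟨h1, h2⟩, rfl⟩
  · rintro ⟨k, ⟨h1, h2⟩, rfl⟩; exact ⟨k, h1, h2, rfl⟩

lemma rvcAux_le {i k : ℕ} (h1 : i ≤ k) (h2 : k ≤ n) :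
    rvcAux n c i ≤ avg c i k := by
  apply csInf_le
  · rw [auxSet_eq]; exact (Finset.finite_toSet _).bddBelow
  · exact ⟨k, h1, h2, rfl⟩

lemma rvcAux_exists {i : ℕ} (h : i ≤ n) :
    ∃ k, i ≤ k ∧ k ≤ n ∧ rvcAux n c i = avg c i k := by
  have hfin : ({x | ∃ k, i ≤ k ∧ k ≤ n ∧ x = avg c i k} : Set ℝ).Finite := by
    rw [auxSet_eq]; exact Finset.finite_toSet _
  have hne : ({x | ∃ k, i ≤ k ∧ k ≤ n ∧ x = avg c i k} : Set ℝ).Nonempty :=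
    ⟨avg c i i, i, le_refl i, h, rfl⟩
  exact hne.csInf_mem hfin

lemma le_rvcAux {i : ℕ} {x : ℝ} (h : i ≤ n)
    (hx : ∀ k, i ≤ k → k ≤ n → x ≤ avg c i k) : x ≤ rvcAux n c i := by
  have hne : ({x | ∃ k, i ≤ k ∧ k ≤ n ∧ x = avg c i k} : Set ℝ).Nonempty :=
    ⟨avg c i i, i, le_refl i, h, rfl⟩
  apply le_csInf hne
  rintro y ⟨k, h1, h2, rfl⟩; exact hx k h1 h2

lemma rvcSet_eq (i : ℕ) :
    {x | ∃ j, 1 ≤ j ∧ j ≤ i ∧ x = rvcAux n c j}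
      = ↑((Finset.Icc 1 i).image (rvcAux n c)) := by
  ext x
  simp only [Set.mem_setOf_eq, Finset.coe_image, Set.mem_image, Finset.mem_coe,
    Finset.mem_Icc]
  constructor
  · rintro ⟨k, h1, h2, rfl⟩; exact ⟨k, ⟨h1, h2⟩, rfl⟩
  · rintro ⟨k, ⟨h1, h2⟩, rfl⟩; exact ⟨k, h1, h2, rfl⟩

lemma rvc_ge {j k : ℕ} (h1 : 1 ≤ j) (h2 : j ≤ k) :
    rvcAux n c j ≤ rvc n c k := by
  apply le_csSup
  · rw [rvcSet_eq]; exact (Finset.finite_toSet _).bddAbove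
  · exact ⟨j, h1, h2, rfl⟩

lemma rvc_exists {k : ℕ} (h : 1 ≤ k) :
    ∃ j, 1 ≤ j ∧ j ≤ k ∧ rvc n c k = rvcAux n c j := by
  have hfin : ({x | ∃ j, 1 ≤ j ∧ j ≤ k ∧ x = rvcAux n c j} : Set ℝ).Finite := by
    rw [rvcSet_eq]; exact Finset.finite_toSet _
  have hne : ({x | ∃ j, 1 ≤ j ∧ j ≤ k ∧ x = rvcAux n c j} : Set ℝ).Nonempty :=
    ⟨rvcAux n c 1, 1, le_refl 1, h, rfl⟩
  exact hne.csSup_mem hfin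

lemma rvc_le {k : ℕ} {x : ℝ} (h : 1 ≤ k)
    (hx : ∀ j, 1 ≤ j → j ≤ k → rvcAux n c j ≤ x) : rvc n c k ≤ x := by
  have hne : ({x | ∃ j, 1 ≤ j ∧ j ≤ k ∧ x = rvcAux n c j} : Set ℝ).Nonempty :=
    ⟨rvcAux n c 1, 1, le_refl 1, h, rfl⟩
  apply csSup_le hne
  rintro y ⟨j, h1, h2, rfl⟩; exact hx j h1 h2

lemma rvc_mono {k k' : ℕ} (h : 1 ≤ k) (h' : k ≤ k') :
    rvc n c k ≤ rvc n c k' := by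
  obtain ⟨j, hj1, hj2, hje⟩ := rvc_exists n c h
  rw [hje]; exact rvc_ge n c hj1 (hj2.trans h')


/-- partial sum of virtual costs over `(p, r]`. -/
noncomputable def S (c : ℕ → ℝ) (p r : ℕ) : ℝ := ∑ j ∈ Finset.Ioc p r, vc c j

lemma avg_eq (m r : ℕ) : avg c (m + 1) r = S c m r / ((r : ℝ) - (m : ℝ)) := by
  unfold avg S
  rw [← Finset.Icc_add_one_left_eq_Ioc]
  congr 1
  push_cast
  ring

lemma S_concat {p m r : ℕ} (h1 : p ≤ m) (h2 : m ≤ r) :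
    S c p m + S c m r = S c p r :=
  Finset.sum_Ioc_consecutive _ h1 h2

lemma S_succ_top {m r : ℕ} (h : m ≤ r) :
    S c m (r + 1) = S c m r + vc c (r + 1) :=
  Finset.sum_Ioc_succ_top h _

lemma S_eq {m r : ℕ} (h : m ≤ r) : S c m r = (r : ℝ) * c r - (m : ℝ) * c m := by
  induction r, h using Nat.le_induction with
  | base => simp [S]
  | succ r hr ih =>
    rw [S_succ_top c hr, ih]
    show _ = ((r+1 : ℕ) : ℝ) * c (r+1) - _
    have : vc c (r + 1) = ((r+1 : ℕ) : ℝ) * c (r+1) - (r : ℝ) * c r := by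
      unfold vc
      push_cast
      simp
    rw [this]
    ring

lemma c1_le_avg (hmono : ∀ i j, i ≤ j → j ≤ n → c i ≤ c j)
    {l r : ℕ} (h1 : 1 ≤ l) (h2 : l ≤ r) (h3 : r ≤ n) : c 1 ≤ avg c l r := by
  obtain ⟨m, rfl⟩ : ∃ m, l = m + 1 := ⟨l - 1, (Nat.succ_pred_eq_of_pos h1).symm⟩
  rw [avg_eq, S_eq c (le_of_lt h2)]
  have hcm : c m ≤ c r := hmono m r (le_of_lt h2) h3
  have hc1r : c 1 ≤ c r := hmono 1 r (le_trans h1 h2) h3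
  have hmr : (m : ℝ) < (r : ℝ) := by exact_mod_cast h2
  have hm0 : (0 : ℝ) ≤ (m : ℝ) := Nat.cast_nonneg m
  rw [le_div_iff₀ (by linarith)]
  nlinarith

lemma c1_le_rvcAux (hmono : ∀ i j, i ≤ j → j ≤ n → c i ≤ c j)
    {i : ℕ} (h1 : 1 ≤ i) (h2 : i ≤ n) : c 1 ≤ rvcAux n c i :=
  le_rvcAux n c h2 fun k hk1 hk2 =>
    c1_le_avg n c hmono h1 hk1 hk2

lemma c1_le_rvc (hmono : ∀ i j, i ≤ j → j ≤ n → c i ≤ c j)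
    {k : ℕ} (h1 : 1 ≤ k) (h2 : k ≤ n) : c 1 ≤ rvc n c k := by
  obtain ⟨j, hj1, hj2, hje⟩ := rvc_exists n c h1
  rw [hje]
  exact c1_le_rvcAux n c hmono hj1 (hj2.trans h2)

/-- next breakpoint: a minimizer of `avg c (p+1) ·` over `[p+1, n]`. -/
noncomputable def nxt (p : ℕ) : ℕ :=
  if h : p < n then (rvcAux_exists n c (h : p + 1 ≤ n)).choose else n

lemma nxt_spec {p : ℕ} (h : p < n) :
    p < nxt n c p ∧ nxt n c p ≤ n ∧ rvcAux n c (p+1) = avg c (p+1) (nxt n c p) := by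
  unfold nxt
  rw [dif_pos h]
  obtain ⟨h1, h2, h3⟩ := (rvcAux_exists n c (h : p + 1 ≤ n)).choose_spec
  exact ⟨h1, h2, h3⟩

/-- the sequence of breakpoints. -/
noncomputable def q : ℕ → ℕ
  | 0 => 0
  | t + 1 => nxt n c (q t)

lemma q_le : ∀ t, q n c t ≤ n := by
  intro t
  induction t with
  | zero => exact Nat.zero_le n
  | succ t ih =>
    show nxt n c (q n c t) ≤ n
    by_cases h : q n c t < n
    · exact (nxt_spec n c h).2.1
    · unfold nxt; rw [dif_neg h]

lemma q_reach : q n c n = n := by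
  have key : ∀ t, t ≤ q n c t ∨ q n c t = n := by
    intro t
    induction t with
    | zero => exact Or.inl (Nat.zero_le _)
    | succ t ih =>
      by_cases h : q n c t < n
      · left
        have := (nxt_spec n c h).1
        rcases ih with h' | h'
        · exact Nat.succ_le_of_lt (lt_of_le_of_lt h' this)
        · omega
      · right
        show nxt n c (q n c t) = n
        unfold nxt; rw [dif_neg h]
  rcases key n with h | h
  · exact le_antisymm (q_le n c n) h
  · exact h


lemma seg {t : ℕ}
    (hC : ∀ l, 1 ≤ l → l ≤ q n c t → rvcAux n c l ≤ rvcAux n c (q n c t + 1))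
    (h : q n c t < n) {k : ℕ} (hk1 : q n c t < k) (hk2 : k ≤ q n c (t+1)) :
    rvc n c k = rvcAux n c (q n c t + 1) := by
  set p := q n c t with hp
  have hq1 : q n c (t+1) = nxt n c p := rfl
  obtain ⟨hpr, hrn, hval⟩ := nxt_spec n c h
  set r := nxt n c p with hrdef
  rw [hq1] at hk2
  have hkn : k ≤ n := hk2.trans hrn
  have hprR : (p : ℝ) < (r : ℝ) := by exact_mod_cast hpr
  have hSpr : S c p r = rvcAux n c (p+1) * ((r : ℝ) - (p : ℝ)) := by
    rw [hval, avg_eq, div_mul_cancel₀ _ (by linarith : (r : ℝ) - (p : ℝ) ≠ 0)]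
  apply le_antisymm
  · apply rvc_le n c (by omega : 1 ≤ k)
    intro l hl1 hl2
    rcases le_or_gt l p with hlp | hlp
    · exact hC l hl1 hlp
    · obtain ⟨m, rfl⟩ : ∃ m, l = m + 1 := ⟨l - 1, (Nat.succ_pred_eq_of_pos hl1).symm⟩
      have hpm : p ≤ m := by omega
      rcases eq_or_lt_of_le hpm with hmp | hmp
      · rw [← hmp]
      · -- p < m
        have hmr : m + 1 ≤ r := le_trans hl2 hk2
        have hmn : m ≤ n := by omega
        have hmrR : (m : ℝ) < (r : ℝ) := by exact_mod_cast (by omega : m < r)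
        have hpmR : (p : ℝ) < (m : ℝ) := by exact_mod_cast hmp
        have h1 : rvcAux n c (m+1) ≤ avg c (m+1) r := rvcAux_le n c hmr hrn
        have h2 : rvcAux n c (p+1) ≤ avg c (p+1) m :=
          rvcAux_le n c (by omega) hmn
        rw [avg_eq] at h1 h2
        rw [le_div_iff₀ (by linarith)] at h2
        have hcc : S c p m + S c m r = S c p r := S_concat c hpm (by omega)
        refine le_trans h1 ?_
        rw [div_le_iff₀ (by linarith)]
        nlinarith
  · exact rvc_ge n c (by omega) (by omega)

lemma main : ∀ t : ℕ,
    (∑ j ∈ Finset.Ioc 0 (q n c t), rvc n c j = S c 0 (q n c t)) ∧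
    (∀ l, 1 ≤ l → l ≤ q n c t → q n c t < n →
      rvcAux n c l ≤ rvcAux n c (q n c t + 1)) := by
  intro t
  induction t with
  | zero =>
    constructor
    · simp [q, S]
    · intro l hl1 hl2 _
      simp [q] at hl2
      omega
  | succ t ih =>
    by_cases h : q n c t < n
    · set p := q n c t with hp
      have hq1 : q n c (t+1) = nxt n c p := rfl
      obtain ⟨hpr, hrn, hval⟩ := nxt_spec n c h
      set r := nxt n c p with hrdef
      have hC : ∀ l, 1 ≤ l → l ≤ p → rvcAux n c l ≤ rvcAux n c (p + 1) :=
        fun l h1 h2 => ih.2 l h1 h2 h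
      have hseg : ∀ k, p < k → k ≤ r → rvc n c k = rvcAux n c (p+1) :=
        fun k h1 h2 => seg n c hC h h1 (by rw [hq1]; exact h2)
      have hprR : (p : ℝ) < (r : ℝ) := by exact_mod_cast hpr
      have hSpr : S c p r = rvcAux n c (p+1) * ((r : ℝ) - (p : ℝ)) := by
        rw [hval, avg_eq, div_mul_cancel₀ _ (by linarith : (r : ℝ) - (p : ℝ) ≠ 0)]
      have hsum2 : ∑ j ∈ Finset.Ioc p r, rvc n c j = S c p r := by
        have hcgr : ∑ j ∈ Finset.Ioc p r, rvc n c j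
            = ∑ _j ∈ Finset.Ioc p r, rvcAux n c (p+1) :=
          Finset.sum_congr rfl (fun j hj => by
            rw [Finset.mem_Ioc] at hj
            exact hseg j hj.1 hj.2)
        rw [hcgr, Finset.sum_const, Nat.card_Ioc, nsmul_eq_mul, hSpr,
          Nat.cast_sub hpr.le]
        ring
      constructor
      · rw [hq1, ← Finset.sum_Ioc_consecutive _ (Nat.zero_le p) hpr.le,
          ← S_concat c (Nat.zero_le p) hpr.le, ih.1, hsum2]
      · intro l hl1 hl2 hlt
        rw [hq1] at hl2 hlt ⊢
        have step1 : rvcAux n c (p+1) ≤ rvcAux n c (r+1) := by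
          apply le_rvcAux n c hlt
          intro r' h1 h2
          obtain ⟨m, rfl⟩ : ∃ m, r' = m + 1 := ⟨r' - 1, by omega⟩
          have h3 : rvcAux n c (p+1) ≤ avg c (p+1) (m+1) :=
            rvcAux_le n c (by omega) h2
          rw [avg_eq] at h3 ⊢
          have hrm : (r : ℝ) ≤ (m : ℝ) := by exact_mod_cast (by omega : r ≤ m)
          have hcc : S c p r + S c r (m+1) = S c p (m+1) := S_concat c hpr.le (by omega)
          have hm1R : ((m:ℝ)+1) - (p:ℝ) > 0 := by push_cast; linarith
          rw [le_div_iff₀ (by push_cast; linarith)] at h3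
          rw [le_div_iff₀ (by push_cast; linarith)]
          push_cast at h3 ⊢
          nlinarith
        have step2 : rvcAux n c l ≤ rvcAux n c (p+1) := by
          have := rvc_ge n c hl1 hl2
          rw [hseg r hpr (le_refl r)] at this
          exact this
        exact step2.trans step1
    · have hqn : q n c t = n := le_antisymm (q_le n c t) (not_lt.mp h)
      have hq1 : q n c (t+1) = n := by
        show nxt n c (q n c t) = n
        unfold nxt
        rw [dif_neg h]
      constructor
      · have h1 := ih.1
        rw [hqn] at h1
        rw [hq1]
        exact h1
      · intro l _ _ hlt
        rw [hq1] at hlt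
        omega


lemma cover {k : ℕ} (hk1 : 1 ≤ k) (hk2 : k ≤ n) :
    ∃ t, q n c t < k ∧ k ≤ q n c (t+1) := by
  have hex : ∃ t, k ≤ q n c t := ⟨n, by rw [q_reach]; exact hk2⟩
  classical
  have hTs := Nat.find_spec hex
  have hT0 : Nat.find hex ≠ 0 := by
    intro h0
    rw [h0] at hTs
    simp [q] at hTs
    omega
  obtain ⟨t, ht⟩ : ∃ t, Nat.find hex = t + 1 := ⟨Nat.find hex - 1, by omega⟩
  have hmin : ¬ k ≤ q n c t := Nat.find_min hex (by omega)
  rw [ht] at hTs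
  exact ⟨t, by omega, hTs⟩

lemma Phi_le {k : ℕ} (hk2 : k ≤ n) :
    ∑ j ∈ Finset.Ioc 0 k, rvc n c j ≤ S c 0 k := by
  rcases Nat.eq_zero_or_pos k with rfl | hk1
  · simp [S]
  · obtain ⟨t, ht1, ht2⟩ := cover n c hk1 hk2
    set p := q n c t with hp
    have hpn : p < n := lt_of_lt_of_le ht1 hk2
    have hC : ∀ l, 1 ≤ l → l ≤ p → rvcAux n c l ≤ rvcAux n c (p + 1) :=
      fun l h1 h2 => (main n c t).2 l h1 h2 hpn
    have hseg : ∀ j, p < j → j ≤ k → rvc n c j = rvcAux n c (p+1) :=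
      fun j h1 h2 => seg n c hC hpn h1 (h2.trans ht2)
    have hsplit : ∑ j ∈ Finset.Ioc 0 p, rvc n c j + ∑ j ∈ Finset.Ioc p k, rvc n c j
        = ∑ j ∈ Finset.Ioc 0 k, rvc n c j :=
      Finset.sum_Ioc_consecutive _ (Nat.zero_le p) ht1.le
    have hcgr : ∑ j ∈ Finset.Ioc p k, rvc n c j
        = ∑ _j ∈ Finset.Ioc p k, rvcAux n c (p+1) :=
      Finset.sum_congr rfl (fun j hj => by
        rw [Finset.mem_Ioc] at hj
        exact hseg j hj.1 hj.2)
    have hpkR : (p : ℝ) < (k : ℝ) := by exact_mod_cast ht1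
    have hv : rvcAux n c (p+1) ≤ avg c (p+1) k := rvcAux_le n c ht1 hk2
    rw [avg_eq, le_div_iff₀ (by linarith)] at hv
    have hsum2 : ∑ j ∈ Finset.Ioc p k, rvc n c j ≤ S c p k := by
      rw [hcgr, Finset.sum_const, Nat.card_Ioc, nsmul_eq_mul, Nat.cast_sub ht1.le]
      calc ((k : ℝ) - (p : ℝ)) * rvcAux n c (p+1)
          = rvcAux n c (p+1) * ((k : ℝ) - (p : ℝ)) := by ring
        _ ≤ S c p k := hv
    have hScc : S c 0 p + S c p k = S c 0 k := S_concat c (Nat.zero_le p) ht1.le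
    have h1 := (main n c t).1
    rw [← hp] at h1
    linarith [h1, hsum2, hScc, hsplit]

lemma Phi_n (hn : 1 ≤ n) : ∑ j ∈ Finset.Ioc 0 n, rvc n c j = S c 0 n := by
  obtain ⟨t, ht1, ht2⟩ := cover n c hn (le_refl n)
  have heq : q n c (t+1) = n := le_antisymm (q_le n c (t+1)) ht2
  have h1 := (main n c (t+1)).1
  rw [heq] at h1
  exact h1

lemma eq_next {k : ℕ} (hk1 : 1 ≤ k) (hk2 : k < n)
    (h : ∑ j ∈ Finset.Ioc 0 k, rvc n c j < S c 0 k) :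
    rvc n c (k+1) = rvc n c k := by
  obtain ⟨t, ht1, ht2⟩ := cover n c hk1 hk2.le
  set p := q n c t with hp
  have hpn : p < n := lt_of_lt_of_le ht1 hk2.le
  have hC : ∀ l, 1 ≤ l → l ≤ p → rvcAux n c l ≤ rvcAux n c (p + 1) :=
    fun l h1 h2 => (main n c t).2 l h1 h2 hpn
  have hkr : k < q n c (t+1) := by
    rcases eq_or_lt_of_le ht2 with he | hl
    · exfalso
      have h1 := (main n c (t+1)).1
      rw [← he] at h1
      linarith
    · exact hl
  have e1 := seg n c hC hpn ht1 ht2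
  have e2 := seg n c hC hpn (ht1.trans (Nat.lt_succ_self k)) hkr
  rw [e1, e2]

lemma abel (A g : ℕ → ℝ) (hg0 : g 0 = 0) (N : ℕ) :
    ∑ k ∈ Finset.Icc 1 N, A k * (g k - g (k-1))
      = (∑ k ∈ Finset.Icc 1 N, (A k - A (k+1)) * g k) + A (N+1) * g N := by
  induction N with
  | zero => simp [hg0]
  | succ N ihN =>
    rw [Finset.sum_Icc_succ_top (by omega : 1 ≤ N + 1),
      Finset.sum_Icc_succ_top (by omega : 1 ≤ N + 1), ihN]
    simp only [Nat.add_sub_cancel]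
    ring

lemma ironing (hn : 1 ≤ n) (A : ℕ → ℝ) :
    ∑ k ∈ Finset.Icc 1 n, A k * vc c k - ∑ k ∈ Finset.Icc 1 n, A k * rvc n c k
      = ∑ k ∈ Finset.Icc 1 n,
          (A k - A (k+1)) * (S c 0 k - ∑ j ∈ Finset.Ioc 0 k, rvc n c j) := by
  set g : ℕ → ℝ := fun k => S c 0 k - ∑ j ∈ Finset.Ioc 0 k, rvc n c j with hg
  have hg0 : g 0 = 0 := by simp [hg, S]
  have hgn : g n = 0 := by
    simp only [hg]
    rw [Phi_n n c hn]
    ring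
  have hstep : ∀ k ∈ Finset.Icc 1 n, A k * vc c k - A k * rvc n c k
      = A k * (g k - g (k-1)) := by
    intro k hk
    rw [Finset.mem_Icc] at hk
    obtain ⟨m, rfl⟩ : ∃ m, k = m + 1 := ⟨k - 1, by omega⟩
    have e1 : S c 0 (m+1) = S c 0 m + vc c (m+1) := S_succ_top c (Nat.zero_le m)
    have e2 : ∑ j ∈ Finset.Ioc 0 (m+1), rvc n c j
        = (∑ j ∈ Finset.Ioc 0 m, rvc n c j) + rvc n c (m+1) :=
      Finset.sum_Ioc_succ_top (Nat.zero_le m) _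
    simp only [hg, Nat.add_sub_cancel, e1, e2]
    ring
  calc ∑ k ∈ Finset.Icc 1 n, A k * vc c k - ∑ k ∈ Finset.Icc 1 n, A k * rvc n c k
      = ∑ k ∈ Finset.Icc 1 n, (A k * vc c k - A k * rvc n c k) :=
        (Finset.sum_sub_distrib _ _).symm
    _ = ∑ k ∈ Finset.Icc 1 n, A k * (g k - g (k-1)) := Finset.sum_congr rfl hstep
    _ = (∑ k ∈ Finset.Icc 1 n, (A k - A (k+1)) * g k) + A (n+1) * g n :=
        abel A g hg0 n
    _ = ∑ k ∈ Finset.Icc 1 n, (A k - A (k+1)) * g k := by rw [hgn]; ring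


lemma pointwise {lam phi a : ℝ} (hlam : 0 < lam) (hphi : 0 < phi)
    (ha0 : 0 < a) (ha1 : a ≤ 1) :
    1 / min 1 (lam / Real.sqrt phi) + (1/lam^2) * min 1 (lam / Real.sqrt phi) * phi
      ≤ 1 / a + (1/lam^2) * a * phi := by
  set s := Real.sqrt phi with hsdef
  have hs : 0 < s := Real.sqrt_pos.mpr hphi
  have hs2 : s^2 = phi := Real.sq_sqrt hphi.le
  rcases le_total (lam / s) 1 with hle | hge
  · rw [min_eq_right hle]
    have e1 : 1 / (lam / s) = s / lam := one_div_div lam s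
    have e2 : (1/lam^2) * (lam / s) * phi = s / lam := by
      rw [← hs2]
      field_simp
    rw [e1, e2, ← hs2]
    have key : 1/a + 1/lam^2 * a * s^2 - (s/lam + s/lam) = (lam - a*s)^2/(a*lam^2) := by
      field_simp
      ring
    have h2 : (0:ℝ) ≤ (lam - a*s)^2/(a*lam^2) :=
      div_nonneg (sq_nonneg _) (by positivity)
    linarith
  · rw [min_eq_left hge]
    have hsl : s ≤ lam := by
      rw [le_div_iff₀ hs] at hge
      linarith
    have hpl : phi ≤ lam^2 := by
      rw [← hs2]
      nlinarith
    have key : 1/a + 1/lam^2*a*phi - (1/1 + 1/lam^2*1*phi) = (1-a)*(lam^2 - a*phi)/(a*lam^2) := by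
      field_simp
      ring
    have h2 : (0:ℝ) ≤ (1-a)*(lam^2 - a*phi)/(a*lam^2) := by
      apply div_nonneg _ (by positivity)
      apply mul_nonneg (by linarith)
      nlinarith
    linarith

end Stmt5aux

/-- the allocation `A*_k = min{1, λ/√(φ_k)}` exhausting the budget
is feasible and minimizes `Σ 1/A_k` over all feasible allocations. -/
theorem stmt5 (n : ℕ) (hn : 1 ≤ n) (c : ℕ → ℝ) (hc0 : c 0 = 0) (hc1 : 0 < c 1)
    (hmono : ∀ i j, i ≤ j → j ≤ n → c i ≤ c j)
    (B : ℝ) (hB : 0 < B) (lam : ℝ) (hlam : 0 < lam)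
    (Astar : ℕ → ℝ)
    (hAstar : ∀ k, 1 ≤ k → k ≤ n → Astar k = min 1 (lam / Real.sqrt (rvc n c k)))
    (hbudget : ∑ k ∈ Finset.Icc 1 n, Astar k * vc c k = B) :
    Feasible n c B Astar ∧
      ∀ A : ℕ → ℝ, Feasible n c B A →
        ∑ k ∈ Finset.Icc 1 n, 1 / Astar k ≤ ∑ k ∈ Finset.Icc 1 n, 1 / A k := by
  have hrvc_pos : ∀ k, 1 ≤ k → k ≤ n → 0 < rvc n c k := fun k h1 h2 =>
    lt_of_lt_of_le hc1 (Stmt5aux.c1_le_rvc n c hmono h1 h2)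
  have hA01 : ∀ k, 1 ≤ k → k ≤ n → 0 < Astar k ∧ Astar k ≤ 1 := by
    intro k h1 h2
    rw [hAstar k h1 h2]
    have hsq : 0 < Real.sqrt (rvc n c k) := Real.sqrt_pos.mpr (hrvc_pos k h1 h2)
    exact ⟨lt_min one_pos (div_pos hlam hsq), min_le_left _ _⟩
  have hAmono : ∀ k, 1 ≤ k → k < n → Astar (k+1) ≤ Astar k := by
    intro k h1 h2
    rw [hAstar k h1 h2.le, hAstar (k+1) (by omega) h2]
    have hle : rvc n c k ≤ rvc n c (k+1) := Stmt5aux.rvc_mono n c h1 (Nat.le_succ k)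
    have hsq : 0 < Real.sqrt (rvc n c k) := Real.sqrt_pos.mpr (hrvc_pos k h1 h2.le)
    have hsq2 : Real.sqrt (rvc n c k) ≤ Real.sqrt (rvc n c (k+1)) :=
      Real.sqrt_le_sqrt hle
    gcongr
  refine ⟨⟨hA01, hAmono, le_of_eq hbudget⟩, ?_⟩
  intro A hA
  obtain ⟨hA1, hA2, hA3⟩ := hA
  -- nonnegativity of g
  have hg_nonneg : ∀ k, k ≤ n → 0 ≤ Stmt5aux.S c 0 k - ∑ j ∈ Finset.Ioc 0 k, rvc n c j :=
    fun k hk => sub_nonneg.mpr (Stmt5aux.Phi_le n c hk)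
  have hgn : Stmt5aux.S c 0 n - ∑ j ∈ Finset.Ioc 0 n, rvc n c j = 0 := by
    rw [Stmt5aux.Phi_n n c hn]
    ring
  -- ironing inequality for A
  have hiron_le : ∑ k ∈ Finset.Icc 1 n, A k * rvc n c k
      ≤ ∑ k ∈ Finset.Icc 1 n, A k * vc c k := by
    have h := Stmt5aux.ironing n c hn A
    have hnn : 0 ≤ ∑ k ∈ Finset.Icc 1 n,
        (A k - A (k+1)) * (Stmt5aux.S c 0 k - ∑ j ∈ Finset.Ioc 0 k, rvc n c j) := by
      apply Finset.sum_nonneg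
      intro k hk
      rw [Finset.mem_Icc] at hk
      rcases eq_or_lt_of_le hk.2 with rfl | hkn
      · rw [hgn, mul_zero]
      · exact mul_nonneg (sub_nonneg.mpr (hA2 k hk.1 hkn)) (hg_nonneg k hk.2)
    linarith
  -- ironing equality for Astar
  have hiron_eq : ∑ k ∈ Finset.Icc 1 n, Astar k * rvc n c k
      = ∑ k ∈ Finset.Icc 1 n, Astar k * vc c k := by
    have h := Stmt5aux.ironing n c hn Astar
    have hz : ∑ k ∈ Finset.Icc 1 n,
        (Astar k - Astar (k+1)) * (Stmt5aux.S c 0 k - ∑ j ∈ Finset.Ioc 0 k, rvc n c j) = 0 := by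
      apply Finset.sum_eq_zero
      intro k hk
      rw [Finset.mem_Icc] at hk
      rcases eq_or_lt_of_le hk.2 with rfl | hkn
      · rw [hgn, mul_zero]
      · rcases eq_or_lt_of_le (Stmt5aux.Phi_le n c hk.2) with he | hl
        · rw [← he, sub_self, mul_zero]
        · have hnext : rvc n c (k+1) = rvc n c k := Stmt5aux.eq_next n c hk.1 hkn hl
          have : Astar k = Astar (k+1) := by
            rw [hAstar k hk.1 hk.2, hAstar (k+1) (by omega) hkn, hnext]
          rw [this]
          ring
    linarith
  have hle_budget : ∑ k ∈ Finset.Icc 1 n, A k * rvc n c k ≤ B :=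
    le_trans hiron_le hA3
  have heq_budget : ∑ k ∈ Finset.Icc 1 n, Astar k * rvc n c k = B := by
    rw [hiron_eq, hbudget]
  -- pointwise comparison
  have hpt : ∑ k ∈ Finset.Icc 1 n,
        (1 / Astar k + (1/lam^2) * Astar k * rvc n c k)
      ≤ ∑ k ∈ Finset.Icc 1 n, (1 / A k + (1/lam^2) * A k * rvc n c k) := by
    apply Finset.sum_le_sum
    intro k hk
    rw [Finset.mem_Icc] at hk
    rw [hAstar k hk.1 hk.2]
    exact Stmt5aux.pointwise hlam (hrvc_pos k hk.1 hk.2) (hA1 k hk.1 hk.2).1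
      (hA1 k hk.1 hk.2).2
  have hsplit : ∀ X : ℕ → ℝ, ∑ k ∈ Finset.Icc 1 n,
        (1 / X k + (1/lam^2) * X k * rvc n c k)
      = (∑ k ∈ Finset.Icc 1 n, 1 / X k)
        + (1/lam^2) * ∑ k ∈ Finset.Icc 1 n, X k * rvc n c k := by
    intro X
    rw [Finset.sum_add_distrib, Finset.mul_sum]
    congr 1
    apply Finset.sum_congr rfl
    intro k _
    ring
  rw [hsplit Astar, hsplit A] at hpt
  have hmu : (0:ℝ) < 1/lam^2 := by positivity
  nlinarith [hpt, hle_budget, heq_budget, hmu]
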